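/- arXiv:2004.14160 — 2 statements merged into one kernel-verified Lean document; each statement's English description precedes it below -/
import Mathlib

section
/- For all natural numbers n and all real numbers x₁ ≠ x₂, (x₂ - x₁) * ∑_{k=0}^{n} C(n,k) * w_k(x₁) * w_{n-k}(x₂) = x₂ * w_n(x₂) - x₁ * w_n(x₁), where w_n(x) = ∑_{k=0}^{n} k! * S(n,k) * x^k. -/
open Finset

def stirling2 : ℕ → ℕ → ℕ
  | 0, 0 => 1
  | 0, _ + 1 => 0
  | _ + 1, 0 => 0
  | n + 1, k + 1 => (k + 1) * stirling2 n (k + 1) + stirling2 n k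

lemma stirling2_eq_zero : ∀ {n m : ℕ}, n < m → stirling2 n m = 0
  | 0, m + 1, _ => rfl
  | n + 1, m + 1, h => by
    have h1 : n < m + 1 := by omega
    have h2 : n < m := by omega
    simp [stirling2, stirling2_eq_zero h1, stirling2_eq_zero h2]

lemma stirling2_succ (n k : ℕ) :
    stirling2 (n + 1) (k + 1) = (k + 1) * stirling2 n (k + 1) + stirling2 n k := rfl

lemma stirA (n : ℕ) : ∀ m : ℕ,
    stirling2 (n + 1) (m + 1) = ∑ j ∈ range (n + 1), n.choose j * stirling2 j m := by
  induction n with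
  | zero => intro m; cases m <;> simp [stirling2]
  | succ n ih =>
    intro m
    have e1 : ∑ j ∈ range (n + 2), (n + 1).choose j * stirling2 j m
        = ∑ j ∈ range (n + 1), (n + 1).choose (j + 1) * stirling2 (j + 1) m
          + stirling2 0 m := by
      rw [Finset.sum_range_succ' _ (n + 1)]; simp
    have e2 : ∀ j ∈ range (n + 1), (n + 1).choose (j + 1) * stirling2 (j + 1) m
        = n.choose j * stirling2 (j + 1) m + n.choose (j + 1) * stirling2 (j + 1) m := by
      intro j _; rw [Nat.choose_succ_succ']; ring
    have e3 : ∑ j ∈ range (n + 1), n.choose (j + 1) * stirling2 (j + 1) m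
        + stirling2 0 m = stirling2 (n + 1) (m + 1) := by
      have h0 : stirling2 0 m = n.choose 0 * stirling2 0 m := by simp
      rw [h0, ← Finset.sum_range_succ' (fun j => n.choose j * stirling2 j m) (n + 1)]
      rw [Finset.sum_range_succ, Nat.choose_succ_self, Nat.zero_mul, Nat.add_zero, ih m]
    have e4 : ∑ j ∈ range (n + 1), n.choose j * stirling2 (j + 1) m
        = m * stirling2 (n + 1) (m + 1) + stirling2 (n + 1) m := by
      cases m with
      | zero =>
        have hz : ∀ j : ℕ, stirling2 (j + 1) 0 = 0 := fun j => rfl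
        have hz2 : stirling2 (n + 1) 0 = 0 := rfl
        simp [hz, hz2]
      | succ m' =>
        have hrec : ∀ j ∈ range (n + 1), n.choose j * stirling2 (j + 1) (m' + 1)
            = (m' + 1) * (n.choose j * stirling2 j (m' + 1)) + n.choose j * stirling2 j m' := by
          intro j _; rw [stirling2_succ]; ring
        rw [Finset.sum_congr rfl hrec, Finset.sum_add_distrib, ← Finset.mul_sum, ← ih, ← ih]
    rw [e1, Finset.sum_congr rfl e2, Finset.sum_add_distrib, e4]
    rw [stirling2_succ (n + 1) m, add_one_mul]
    set mx := m * stirling2 (n + 1) (m + 1) with hmx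
    omega

lemma stirP (n m : ℕ) :
    ∑ j ∈ range (n + 1), (n + 1).choose j * stirling2 j m
      = (m + 1) * stirling2 (n + 1) (m + 1) := by
  have h := stirA (n + 1) m
  rw [Finset.sum_range_succ, Nat.choose_self, one_mul] at h
  rw [stirling2_succ (n + 1) m] at h
  set mx := (m + 1) * stirling2 (n + 1) (m + 1) with hmx
  omega

noncomputable def w (n : ℕ) (x : ℝ) : ℝ :=
  ∑ k ∈ range (n + 1), (k.factorial : ℝ) * (stirling2 n k : ℝ) * x ^ k

lemma stirling2_zero_succ (n : ℕ) : stirling2 (n + 1) 0 = 0 := rfl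

lemma w_zero (x : ℝ) : w 0 x = 1 := by
  simp [w, stirling2]

lemma wrec (n : ℕ) (x : ℝ) :
    w (n + 1) x = x * ∑ j ∈ range (n + 1), ((n + 1).choose j : ℝ) * w j x := by
  have h1 : ∀ j ∈ range (n + 1), ((n + 1).choose j : ℝ) * w j x
      = ∑ m ∈ range (n + 1),
          ((n + 1).choose j : ℝ) * ((m.factorial : ℝ) * (stirling2 j m : ℝ) * x ^ m) := by
    intro j hj
    rw [w, Finset.mul_sum]
    apply Finset.sum_subset
    · apply Finset.range_subset_range.mpr
      simp only [Finset.mem_range] at hj; omega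
    · intro m _ hm
      simp only [Finset.mem_range] at hm
      rw [stirling2_eq_zero (by omega : j < m)]
      simp
  rw [Finset.sum_congr rfl h1, Finset.sum_comm]
  have h2 : ∀ m ∈ range (n + 1),
      ∑ j ∈ range (n + 1),
          ((n + 1).choose j : ℝ) * ((m.factorial : ℝ) * (stirling2 j m : ℝ) * x ^ m)
        = ((m : ℝ) + 1) * (stirling2 (n + 1) (m + 1) : ℝ) * ((m.factorial : ℝ) * x ^ m) := by
    intro m _
    have hc : (∑ j ∈ range (n + 1), ((n + 1).choose j : ℝ) * (stirling2 j m : ℝ))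
        = ((m : ℝ) + 1) * (stirling2 (n + 1) (m + 1) : ℝ) := by
      have h := stirP n m
      calc (∑ j ∈ range (n + 1), ((n + 1).choose j : ℝ) * (stirling2 j m : ℝ))
          = ((∑ j ∈ range (n + 1), (n + 1).choose j * stirling2 j m : ℕ) : ℝ) := by
            push_cast; rfl
        _ = _ := by rw [h]; push_cast; ring
    calc ∑ j ∈ range (n + 1),
            ((n + 1).choose j : ℝ) * ((m.factorial : ℝ) * (stirling2 j m : ℝ) * x ^ m)
        = (∑ j ∈ range (n + 1), ((n + 1).choose j : ℝ) * (stirling2 j m : ℝ))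
            * ((m.factorial : ℝ) * x ^ m) := by
          rw [Finset.sum_mul]; exact Finset.sum_congr rfl fun j _ => by ring
      _ = _ := by rw [hc]
  rw [Finset.sum_congr rfl h2, w, Finset.sum_range_succ' _ (n + 1), stirling2_zero_succ]
  rw [Finset.mul_sum]
  simp only [Nat.cast_zero, mul_zero, zero_mul, add_zero, pow_zero, mul_one]
  exact Finset.sum_congr rfl fun k _ => by
    push_cast [Nat.factorial_succ]; ring


lemma Arec (n : ℕ) (x₁ x₂ : ℝ) :
    ∑ k ∈ range (n + 1), (n.choose k : ℝ) * w k x₁ * w (n - k) x₂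
      = w n x₂ + x₁ * ∑ m ∈ range n, (n.choose m : ℝ) *
          ∑ j ∈ range (m + 1), (m.choose j : ℝ) * w j x₁ * w (m - j) x₂ := by
  rw [Finset.sum_range_succ' _ n]
  rw [Nat.choose_zero_right, Nat.cast_one, one_mul, w_zero, Nat.sub_zero, one_mul]
  rw [add_comm]
  congr 1
  have e1 : ∀ k ∈ range n, (n.choose (k + 1) : ℝ) * w (k + 1) x₁ * w (n - (k + 1)) x₂
      = ∑ j ∈ range (k + 1),
          x₁ * (((n.choose (k + 1) : ℝ) * ((k + 1).choose j : ℝ)) * w j x₁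
            * w (n - (k + 1)) x₂) := by
    intro k _
    rw [wrec k x₁]
    simp only [Finset.mul_sum, Finset.sum_mul]
    exact Finset.sum_congr rfl fun j _ => by ring
  rw [Finset.sum_congr rfl e1]
  have e2 : x₁ * ∑ m ∈ range n, (n.choose m : ℝ) *
        ∑ j ∈ range (m + 1), (m.choose j : ℝ) * w j x₁ * w (m - j) x₂
      = ∑ m ∈ range n, ∑ j ∈ range (m + 1),
          x₁ * (((n.choose m : ℝ) * ((m.choose j : ℝ))) * w j x₁ * w (m - j) x₂) := by
    simp only [Finset.mul_sum]
    exact Finset.sum_congr rfl fun m _ => Finset.sum_congr rfl fun j _ => by ring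
  rw [e2]
  rw [Finset.sum_sigma', Finset.sum_sigma']
  apply Finset.sum_nbij' (fun p => (⟨n - 1 - p.1 + p.2, p.2⟩ : Σ _ : ℕ, ℕ))
    (fun p => (⟨n - 1 - p.1 + p.2, p.2⟩ : Σ _ : ℕ, ℕ))
  · rintro ⟨k, j⟩ ha
    simp only [Finset.mem_sigma, Finset.mem_range] at ha ⊢
    omega
  · rintro ⟨k, j⟩ ha
    simp only [Finset.mem_sigma, Finset.mem_range] at ha ⊢
    omega
  · rintro ⟨k, j⟩ ha
    simp only [Finset.mem_sigma, Finset.mem_range] at ha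
    dsimp only
    have hx : n - 1 - (n - 1 - k + j) + j = k := by omega
    rw [hx]
  · rintro ⟨k, j⟩ ha
    simp only [Finset.mem_sigma, Finset.mem_range] at ha
    dsimp only
    have hx : n - 1 - (n - 1 - k + j) + j = k := by omega
    rw [hx]
  · rintro ⟨k, j⟩ ha
    simp only [Finset.mem_sigma, Finset.mem_range] at ha
    simp only
    have hj : j ≤ k := by omega
    have hk : k + 1 ≤ n := by omega
    have hcoef : n.choose (k + 1) * (k + 1).choose j
        = n.choose (n - 1 - k + j) * (n - 1 - k + j).choose j := by
      rw [Nat.choose_mul (by omega : j ≤ k + 1), Nat.choose_mul (by omega : j ≤ n - 1 - k + j)]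
      congr 1
      have h1 : n - 1 - k + j - j = (n - j) - (k + 1 - j) := by omega
      rw [h1, Nat.choose_symm (by omega)]
    have hc : ((n.choose (k + 1) : ℝ) * ((k + 1).choose j : ℝ))
        = ((n.choose (n - 1 - k + j) : ℝ) * ((n - 1 - k + j).choose j : ℝ)) := by
      exact_mod_cast congrArg (Nat.cast : ℕ → ℝ) hcoef
    have hw : n - (k + 1) = n - 1 - k + j - j := by omega
    rw [hw, hc]

theorem stmt1 (n : ℕ) (x₁ x₂ : ℝ) (h : x₁ ≠ x₂) :
    (x₂ - x₁) * ∑ k ∈ range (n + 1), (n.choose k : ℝ) * w k x₁ * w (n - k) x₂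
      = x₂ * w n x₂ - x₁ * w n x₁ := by
  have symm : ∀ (m : ℕ) (y₁ y₂ : ℝ),
      ∑ k ∈ range (m + 1), (m.choose k : ℝ) * w k y₁ * w (m - k) y₂
        = ∑ k ∈ range (m + 1), (m.choose k : ℝ) * w k y₂ * w (m - k) y₁ := by
    intro m y₁ y₂
    rw [← Finset.sum_range_reflect]
    apply Finset.sum_congr rfl
    intro k hk
    simp only [Finset.mem_range] at hk
    have h1 : m + 1 - 1 - k = m - k := by omega
    have h2 : m - (m - k) = k := by omega
    rw [h1, h2, Nat.choose_symm (by omega)]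
    ring
  have h1 := Arec n x₁ x₂
  have h2 := Arec n x₂ x₁
  rw [symm n x₂ x₁] at h2
  have e : ∑ m ∈ range n, (n.choose m : ℝ) *
        ∑ j ∈ range (m + 1), (m.choose j : ℝ) * w j x₂ * w (m - j) x₁
      = ∑ m ∈ range n, (n.choose m : ℝ) *
        ∑ j ∈ range (m + 1), (m.choose j : ℝ) * w j x₁ * w (m - j) x₂ :=
    Finset.sum_congr rfl fun m _ => by rw [symm m x₂ x₁]
  rw [e] at h2
  linear_combination x₂ * h1 - x₁ * h2
end

section
/- Let F̃_{m,a}(n;x) = ∑_{k=0}^{n} C(n,k) * m^k * w_k(x/m) * (-a)^{n-k} with m ≠ 0. Then for all natural n, real m ≠ 0, a₁, a₂, and real x₁ ≠ x₂: (x₂ - x₁) * ∑_{k=0}^{n} C(n,k) * F̃_{m,a₁}(k;x₁) * F̃_{m,a₂}(n-k;x₂) = x₂ * F̃_{m,a₁+a₂}(n;x₂) - x₁ * F̃_{m,a₁+a₂}(n;x₁). -/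
open Finset

noncomputable def Ft (m a : ℝ) (n : ℕ) (x : ℝ) : ℝ :=
  ∑ k ∈ range (n + 1), (n.choose k : ℝ) * m ^ k * w k (x / m) * (-a) ^ (n - k)

lemma stirling2_zero_right (n : ℕ) : stirling2 (n+1) 0 = 0 := rfl

lemma stirling2_eq_zero_s10 {n k : ℕ} (h : n < k) : stirling2 n k = 0 := by
  induction n generalizing k with
  | zero =>
    cases k with
    | zero => omega
    | succ k => rfl
  | succ n ih =>
    cases k with
    | zero => omega
    | succ k =>
      show (k + 1) * stirling2 n (k + 1) + stirling2 n k = 0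
      rw [ih (by omega), ih (by omega)]
      ring

lemma stirling2_one (n : ℕ) : stirling2 (n+1) 1 = 1 := by
  induction n with
  | zero => rfl
  | succ n ih =>
    show (0 + 1) * stirling2 (n+1) 1 + stirling2 (n+1) 0 = 1
    rw [ih, stirling2_zero_right]

lemma stirling_rec (n : ℕ) : ∀ j, (j+1) * stirling2 (n+1) (j+1) =
    ∑ k ∈ range (n+1), (n+1).choose (k+1) * stirling2 (n-k) j := by
  induction n with
  | zero =>
    intro j
    cases j <;> simp [stirling2]
  | succ n ih =>
    intro j
    have hsplit : ∑ k ∈ range (n+2), (n+2).choose (k+1) * stirling2 (n+1-k) j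
        = (∑ k ∈ range (n+2), (n+1).choose k * stirling2 (n+1-k) j)
          + ∑ k ∈ range (n+2), (n+1).choose (k+1) * stirling2 (n+1-k) j := by
      rw [← Finset.sum_add_distrib]
      refine Finset.sum_congr rfl fun k _ => ?_
      rw [Nat.choose_succ_succ, add_mul]
    have hA : ∑ k ∈ range (n+2), (n+1).choose k * stirling2 (n+1-k) j
        = (j+1) * stirling2 (n+1) (j+1) + stirling2 (n+1) j := by
      rw [Finset.sum_range_succ' (fun k => (n+1).choose k * stirling2 (n+1-k) j) (n+1)]
      have h1 : ∀ i ∈ range (n+1), (n+1).choose (i+1) * stirling2 (n+1-(i+1)) j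
          = (n+1).choose (i+1) * stirling2 (n-i) j := by
        intro i hi
        congr 2
        omega
      rw [Finset.sum_congr rfl h1, ← ih j]
      simp [add_comm]
    have hB : ∑ k ∈ range (n+2), (n+1).choose (k+1) * stirling2 (n+1-k) j
        = ∑ k ∈ range (n+1), (n+1).choose (k+1) * stirling2 ((n-k)+1) j := by
      rw [Finset.sum_range_succ (fun k => (n+1).choose (k+1) * stirling2 (n+1-k) j) (n+1)]
      have h0 : (n+1).choose (n+1+1) = 0 := Nat.choose_eq_zero_of_lt (by omega)
      rw [h0, zero_mul, add_zero]
      refine Finset.sum_congr rfl fun k hk => ?_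
      have : k < n + 1 := Finset.mem_range.mp hk
      congr 2
      omega
    rw [hsplit, hA, hB]
    cases j with
    | zero =>
      have : ∀ k ∈ range (n+1), (n+1).choose (k+1) * stirling2 ((n-k)+1) 0 = 0 := by
        intro k _
        rw [stirling2_zero_right, mul_zero]
      rw [Finset.sum_congr rfl this, Finset.sum_const_zero]
      simp [stirling2_one, stirling2]
    | succ j =>
      have hstep : ∀ k ∈ range (n+1), (n+1).choose (k+1) * stirling2 ((n-k)+1) (j+1)
          = (j+1) * ((n+1).choose (k+1) * stirling2 (n-k) (j+1))
            + (n+1).choose (k+1) * stirling2 (n-k) j := by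
        intro k _
        show (n+1).choose (k+1) * ((j + 1) * stirling2 (n-k) (j + 1) + stirling2 (n-k) j) = _
        ring
      rw [Finset.sum_congr rfl hstep, Finset.sum_add_distrib, ← Finset.mul_sum,
        ← ih (j+1), ← ih j]
      show (j+2) * stirling2 (n+2) (j+2) = _
      have : stirling2 (n+2) (j+2) = (j+2) * stirling2 (n+1) (j+2) + stirling2 (n+1) (j+1) := rfl
      rw [this]
      ring

lemma w_rec (n : ℕ) (y : ℝ) :
    w (n+1) y = y * ∑ k ∈ range (n+1), ((n+1).choose (k+1) : ℝ) * w (n-k) y := by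
  have hext : ∀ k ∈ range (n+1), ((n+1).choose (k+1) : ℝ) * w (n-k) y
      = ∑ j ∈ range (n+1), ((n+1).choose (k+1) : ℝ)
          * ((j.factorial : ℝ) * (stirling2 (n-k) j : ℝ) * y ^ j) := by
    intro k hk
    have h1 : w (n-k) y
        = ∑ j ∈ range (n+1), (j.factorial : ℝ) * (stirling2 (n-k) j : ℝ) * y ^ j := by
      unfold w
      apply Finset.sum_subset
      · apply Finset.range_subset_range.mpr
        have := Finset.mem_range.mp hk
        omega
      · intro j hj hj2
        have hlt : n - k < j := by
          simp only [Finset.mem_range, not_lt] at hj2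
          omega
        rw [stirling2_eq_zero_s10 hlt]
        simp
    rw [h1, Finset.mul_sum]
  rw [Finset.sum_congr rfl hext, Finset.sum_comm]
  have hinner : ∀ j ∈ range (n+1),
      ∑ k ∈ range (n+1), ((n+1).choose (k+1) : ℝ)
          * ((j.factorial : ℝ) * (stirling2 (n-k) j : ℝ) * y ^ j)
      = ((j+1).factorial : ℝ) * (stirling2 (n+1) (j+1) : ℝ) * y ^ j := by
    intro j _
    have h2 : ∑ k ∈ range (n+1), ((n+1).choose (k+1) : ℝ)
          * ((j.factorial : ℝ) * (stirling2 (n-k) j : ℝ) * y ^ j)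
        = (j.factorial : ℝ) * y ^ j
          * ∑ k ∈ range (n+1), ((n+1).choose (k+1) : ℝ) * (stirling2 (n-k) j : ℝ) := by
      rw [Finset.mul_sum]
      exact Finset.sum_congr rfl fun k _ => by ring
    rw [h2]
    have hs := congrArg (Nat.cast : ℕ → ℝ) (stirling_rec n j)
    push_cast at hs
    rw [← hs, Nat.factorial_succ]
    push_cast
    ring
  rw [Finset.sum_congr rfl hinner]
  unfold w
  rw [Finset.sum_range_succ' (fun j => (j.factorial : ℝ) * (stirling2 (n+1) j : ℝ) * y ^ j) (n+1)]
  rw [Finset.mul_sum, stirling2_zero_right]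
  push_cast
  rw [mul_zero, zero_mul, add_zero]
  exact Finset.sum_congr rfl fun j _ => by ring

noncomputable def bconv (f g : ℕ → ℝ) (n : ℕ) : ℝ :=
  ∑ k ∈ range (n+1), (n.choose k : ℝ) * f k * g (n-k)

noncomputable def ps (f : ℕ → ℝ) : PowerSeries ℝ := PowerSeries.mk fun n => f n / n.factorial

lemma bconv_eq (f g : ℕ → ℝ) (n : ℕ) :
    bconv f g n = n.factorial * PowerSeries.coeff n (ps f * ps g) := by
  rw [PowerSeries.coeff_mul]
  rw [Finset.Nat.sum_antidiagonal_eq_sum_range_succ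
    (fun i j => PowerSeries.coeff i (ps f) * PowerSeries.coeff j (ps g)) n]
  rw [Finset.mul_sum]
  refine Finset.sum_congr rfl fun k hk => ?_
  have hk' : k ≤ n := Nat.lt_succ_iff.mp (Finset.mem_range.mp hk)
  simp only [ps, PowerSeries.coeff_mk]
  have h : (n.factorial : ℝ) = (n.choose k : ℝ) * k.factorial * (n-k).factorial := by
    rw [← Nat.choose_mul_factorial_mul_factorial hk']
    push_cast
    ring
  rw [h]
  have h1 : (k.factorial : ℝ) ≠ 0 := Nat.cast_ne_zero.mpr k.factorial_ne_zero
  have h2 : ((n-k).factorial : ℝ) ≠ 0 := Nat.cast_ne_zero.mpr (n-k).factorial_ne_zero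
  field_simp

lemma ps_bconv (f g : ℕ → ℝ) : ps (bconv f g) = ps f * ps g := by
  apply PowerSeries.ext
  intro n
  have h1 : (n.factorial : ℝ) ≠ 0 := Nat.cast_ne_zero.mpr n.factorial_ne_zero
  have := bconv_eq f g n
  simp only [ps, PowerSeries.coeff_mk]
  rw [this]
  field_simp
  rfl

lemma bconv_comm (f g : ℕ → ℝ) : bconv f g = bconv g f := by
  funext n
  rw [bconv_eq, bconv_eq, mul_comm (ps f)]

lemma bconv_assoc (f g h : ℕ → ℝ) : bconv (bconv f g) h = bconv f (bconv g h) := by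
  funext n
  rw [bconv_eq, bconv_eq, ps_bconv, ps_bconv, mul_assoc]

noncomputable def edelta (n : ℕ) : ℝ := if n = 0 then 1 else 0

lemma bconv_one (f : ℕ → ℝ) : bconv edelta f = f := by
  have hps : ps edelta = 1 := by
    apply PowerSeries.ext
    intro n
    simp only [ps, PowerSeries.coeff_mk, edelta, PowerSeries.coeff_one]
    cases n <;> simp
  funext n
  rw [bconv_eq, hps, one_mul]
  simp only [ps, PowerSeries.coeff_mk]
  have h1 : (n.factorial : ℝ) ≠ 0 := Nat.cast_ne_zero.mpr n.factorial_ne_zero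
  field_simp

lemma bconv_add_smul (f g h : ℕ → ℝ) (c : ℝ) :
    bconv f (fun k => g k + c * h k) = fun n => bconv f g n + c * bconv f h n := by
  funext n
  unfold bconv
  rw [Finset.mul_sum, ← Finset.sum_add_distrib]
  refine Finset.sum_congr rfl fun k _ => ?_
  ring

lemma bconv_EE (a b : ℝ) :
    bconv (fun k => (-a)^k) (fun k => (-b)^k) = fun n => (-(a+b))^n := by
  funext n
  unfold bconv
  rw [neg_add, add_pow]
  refine Finset.sum_congr rfl fun k _ => ?_
  ring

noncomputable def Gf (m x : ℝ) (n : ℕ) : ℝ := m ^ n * w n (x / m)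

noncomputable def Dm (m : ℝ) (k : ℕ) : ℝ := if k = 0 then 0 else m ^ (k - 1)

lemma G_rec (m x : ℝ) (hm : m ≠ 0) :
    Gf m x = fun n => edelta n + x * bconv (Dm m) (Gf m x) n := by
  funext n
  cases n with
  | zero =>
    simp [Gf, w, edelta, bconv, Dm, stirling2]
  | succ n =>
    show m ^ (n+1) * w (n+1) (x/m) = edelta (n+1) + x * bconv (Dm m) (Gf m x) (n+1)
    rw [w_rec n (x/m)]
    have hb : bconv (Dm m) (Gf m x) (n+1)
        = ∑ k ∈ range (n+1), ((n+1).choose (k+1) : ℝ) * m ^ k * (m ^ (n-k) * w (n-k) (x/m)) := by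
      unfold bconv
      rw [Finset.sum_range_succ' (fun k => ((n+1).choose k : ℝ) * Dm m k * Gf m x (n+1-k)) (n+1)]
      have h0 : ((n+1).choose 0 : ℝ) * Dm m 0 * Gf m x (n+1-0) = 0 := by
        simp [Dm]
      rw [h0, add_zero]
      refine Finset.sum_congr rfl fun i _ => ?_
      have h1 : n + 1 - (i+1) = n - i := by omega
      rw [h1]
      have hD : Dm m (i+1) = m ^ i := by simp [Dm]
      rw [hD]
      rfl
    rw [hb]
    have he : edelta (n+1) = 0 := rfl
    rw [he, zero_add]
    have hterm : ∀ k ∈ range (n+1),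
        ((n+1).choose (k+1) : ℝ) * m ^ k * (m ^ (n-k) * w (n-k) (x/m))
        = m ^ n * (((n+1).choose (k+1) : ℝ) * w (n-k) (x/m)) := by
      intro k hk
      have hp : m ^ k * m ^ (n-k) = m ^ n := by
        rw [← pow_add]
        congr 1
        have := Finset.mem_range.mp hk
        omega
      rw [← hp]
      ring
    rw [Finset.sum_congr rfl hterm, ← Finset.mul_sum]
    field_simp
    ring

lemma Ft_eq (m a x : ℝ) (n : ℕ) : Ft m a n x = bconv (Gf m x) (fun k => (-a)^k) n := by
  unfold Ft bconv Gf
  exact Finset.sum_congr rfl fun k _ => by ring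

lemma F_rec (G E D : ℕ → ℝ) (c : ℝ) (hG : G = fun n => edelta n + c * bconv D G n) :
    bconv G E = fun n => E n + c * bconv D (bconv G E) n := by
  calc bconv G E = bconv E G := bconv_comm G E
    _ = bconv E (fun n => edelta n + c * bconv D G n) := by rw [← hG]
    _ = fun n => bconv E edelta n + c * bconv E (bconv D G) n :=
        bconv_add_smul E edelta (bconv D G) c
    _ = fun n => E n + c * bconv D (bconv G E) n := by
        rw [bconv_comm E edelta, bconv_one, bconv_comm E (bconv D G), bconv_assoc,
          bconv_comm G E]

theorem stmt10 (n : ℕ) (m a₁ a₂ x₁ x₂ : ℝ) (hm : m ≠ 0) (hx : x₁ ≠ x₂) :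
    (x₂ - x₁) * ∑ k ∈ range (n + 1), (n.choose k : ℝ) * Ft m a₁ k x₁ * Ft m a₂ (n - k) x₂
      = x₂ * Ft m (a₁ + a₂) n x₂ - x₁ * Ft m (a₁ + a₂) n x₁ := by
  set G₁ := Gf m x₁ with hG₁def
  set G₂ := Gf m x₂ with hG₂def
  set E₁ : ℕ → ℝ := fun k => (-a₁)^k with hE₁def
  set E₂ : ℕ → ℝ := fun k => (-a₂)^k with hE₂def
  set D := Dm m with hDdef
  have hF₁ : (fun k => Ft m a₁ k x₁) = bconv G₁ E₁ := funext fun k => Ft_eq m a₁ x₁ k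
  have hF₂ : (fun k => Ft m a₂ k x₂) = bconv G₂ E₂ := funext fun k => Ft_eq m a₂ x₂ k
  have hrec₁ : bconv G₁ E₁ = fun k => E₁ k + x₁ * bconv D (bconv G₁ E₁) k :=
    F_rec G₁ E₁ D x₁ (G_rec m x₁ hm)
  have hrec₂ : bconv G₂ E₂ = fun k => E₂ k + x₂ * bconv D (bconv G₂ E₂) k :=
    F_rec G₂ E₂ D x₂ (G_rec m x₂ hm)
  set H := bconv (bconv G₁ E₁) (bconv G₂ E₂) with hHdef
  -- H = Ft(a₁+a₂, x₁) + x₂ * bconv D H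
  have mix : ∀ (A B Z : ℕ → ℝ), bconv A (bconv Z B) = bconv Z (bconv A B) := by
    intro A B Z
    rw [← bconv_assoc, bconv_comm A Z, bconv_assoc]
  have key₂ : H = fun k => bconv G₁ (bconv E₁ E₂) k + x₂ * bconv D H k := by
    conv_lhs => rw [hHdef, hrec₂]
    rw [bconv_add_smul, mix (bconv G₁ E₁) (bconv G₂ E₂) D, ← hHdef, bconv_assoc]
  have key₁ : H = fun k => bconv G₂ (bconv E₂ E₁) k + x₁ * bconv D H k := by
    have hHc : H = bconv (bconv G₂ E₂) (bconv G₁ E₁) := bconv_comm _ _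
    conv_lhs => rw [hHc, hrec₁]
    rw [bconv_add_smul, mix (bconv G₂ E₂) (bconv G₁ E₁) D, ← hHc, bconv_assoc]
  have hEE₁ : bconv E₁ E₂ = fun k => (-(a₁+a₂))^k := bconv_EE a₁ a₂
  have hEE₂ : bconv E₂ E₁ = fun k => (-(a₁+a₂))^k := by
    rw [hE₂def, hE₁def, bconv_EE, add_comm a₂ a₁]
  have hFs₁ : bconv G₁ (bconv E₁ E₂) n = Ft m (a₁+a₂) n x₁ := by
    rw [hEE₁, Ft_eq]
  have hFs₂ : bconv G₂ (bconv E₂ E₁) n = Ft m (a₁+a₂) n x₂ := by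
    rw [hEE₂, Ft_eq]
  have h1 := congrFun key₁ n
  have h2 := congrFun key₂ n
  rw [hFs₂] at h1
  rw [hFs₁] at h2
  have hLHS : ∑ k ∈ range (n + 1), (n.choose k : ℝ) * Ft m a₁ k x₁ * Ft m a₂ (n - k) x₂
      = H n := by
    rw [hHdef, ← hF₁, ← hF₂]
    rfl
  rw [hLHS]
  linear_combination x₂ * h1 - x₁ * h2
end
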